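/- Let H be a finite-dimensional complex inner product space, ψ ∈ H, P₁, ..., P_L orthogonal projections on H, and c > 0. Then ‖ψ‖² − ‖P_L P_{L-1} ⋯ P₁ ψ‖² ≤ (1 + c)·‖(I − P_L) ψ‖² + (2 + c + c⁻¹)·∑_{i=2}^{L-1} ‖(I − P_i) ψ‖² + (2 + c⁻¹)·‖(I − P₁) ψ‖². -/

import Mathlib

open scoped InnerProductSpace

/-- `descComp P k = P k ∘ P (k-1) ∘ ⋯ ∘ P 1`, empty composition is the identity. -/
def descComp {H : Type*} [AddCommGroup H] [Module ℂ H]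
    (P : ℕ → (H →ₗ[ℂ] H)) : ℕ → (H →ₗ[ℂ] H)
  | 0 => 1
  | k + 1 => P (k + 1) ∘ₗ descComp P k

section Aux

variable {H : Type*} [NormedAddCommGroup H] [InnerProductSpace ℂ H]

lemma aux_orth (P : H →ₗ[ℂ] H) (hs : P.IsSymmetric) (hi : ∀ v, P (P v) = P v) (v w : H) :
    ⟪P v, w - P w⟫_ℂ = 0 := by
  rw [hs]
  simp [inner_sub_right, hi]

lemma aux_pyth (P : H →ₗ[ℂ] H) (hs : P.IsSymmetric) (hi : ∀ v, P (P v) = P v) (v : H) :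
    ‖v‖ ^ 2 = ‖P v‖ ^ 2 + ‖v - P v‖ ^ 2 := by
  have h := aux_orth P hs hi v v
  have hv : v = P v + (v - P v) := by abel
  calc ‖v‖ ^ 2 = ‖P v + (v - P v)‖ ^ 2 := by rw [← hv]
    _ = ‖P v‖ ^ 2 + 2 * RCLike.re ⟪P v, v - P v⟫_ℂ + ‖v - P v‖ ^ 2 := norm_add_sq _ _
    _ = ‖P v‖ ^ 2 + ‖v - P v‖ ^ 2 := by rw [h]; simp

lemma real_amgm {a b e d c : ℝ} (ha : 0 ≤ a) (hb : 0 ≤ b) (hbe : b ≤ e) (hc : 0 < c)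
    (h4 : d ≤ (a + b) ^ 2) : d ≤ (1 + c) * a ^ 2 + (1 + c⁻¹) * e ^ 2 := by
  have hc' : 0 < c⁻¹ := by positivity
  have hcc : c * c⁻¹ = 1 := mul_inv_cancel₀ hc.ne'
  have hb2 : b ^ 2 ≤ e ^ 2 := by nlinarith
  have amgm : 2 * a * b ≤ c * a ^ 2 + c⁻¹ * b ^ 2 := by
    nlinarith [sq_nonneg (c * a - b)]
  nlinarith

lemma aux_contract (P : H →ₗ[ℂ] H) (hs : P.IsSymmetric) (hi : ∀ v, P (P v) = P v) (v : H) :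
    ‖v - P v‖ ≤ ‖v‖ := by
  have h := aux_pyth P hs hi v
  nlinarith [norm_nonneg (v - P v), norm_nonneg v, norm_nonneg (P v), sq_nonneg (‖P v‖)]

end Aux

theorem stmt4 {H : Type*} [NormedAddCommGroup H] [InnerProductSpace ℂ H]
    [FiniteDimensional ℂ H] (L : ℕ) (hL : 1 ≤ L) (P : ℕ → (H →ₗ[ℂ] H))
    (hsym : ∀ i ∈ Finset.Icc 1 L, (P i).IsSymmetric)
    (hidem : ∀ i ∈ Finset.Icc 1 L, P i ∘ₗ P i = P i)
    (ψ : H) (c : ℝ) (hc : 0 < c) :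
    ‖ψ‖ ^ 2 - ‖descComp P L ψ‖ ^ 2
      ≤ (1 + c) * ‖(1 - P L) ψ‖ ^ 2
        + (2 + c + c⁻¹) * ∑ i ∈ Finset.Icc 2 (L - 1), ‖(1 - P i) ψ‖ ^ 2
        + (2 + c⁻¹) * ‖(1 - P 1) ψ‖ ^ 2 := by
  have hc' : (0:ℝ) < c⁻¹ := by positivity
  have hcc : c * c⁻¹ = 1 := mul_inv_cancel₀ (ne_of_gt hc)
  -- pointwise idempotence
  have hidem' : ∀ i ∈ Finset.Icc 1 L, ∀ v : H, P i (P i v) = P i v := by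
    intro i hi v
    have := hidem i hi
    exact congrFun (congrArg DFunLike.coe this) v
  -- rewrite (1 - P i) ψ as ψ - P i ψ
  have hone : ∀ i, (1 - P i) ψ = ψ - P i ψ := by
    intro i; simp [LinearMap.sub_apply]
  -- key induction
  have key : ∀ m : ℕ, 1 ≤ m → m ≤ L →
      ‖ψ‖ ^ 2 - ‖descComp P m ψ‖ ^ 2 + (1 + c⁻¹) * ‖ψ - descComp P m ψ‖ ^ 2
        ≤ (2 + c + c⁻¹) * ∑ i ∈ Finset.Icc 2 m, ‖ψ - P i ψ‖ ^ 2
          + (2 + c⁻¹) * ‖ψ - P 1 ψ‖ ^ 2 := by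
    intro m
    induction m with
    | zero => intro h; omega
    | succ n ih =>
      intro _ hnL
      rcases Nat.eq_zero_or_pos n with hn0 | hn1
      · subst hn0
        have h1L : 1 ∈ Finset.Icc 1 L := by simp [hL]
        have hp : descComp P 1 ψ = P 1 ψ := by
          simp [descComp]
        rw [hp]
        have hpy := aux_pyth (P 1) (hsym 1 h1L) (hidem' 1 h1L) ψ
        have hsum : (Finset.Icc 2 1) = (∅ : Finset ℕ) := by decide
        rw [hsum]
        simp only [Finset.sum_empty, mul_zero, zero_add]
        nlinarith [sq_nonneg (‖ψ - P 1 ψ‖)]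
      · -- n ≥ 1
        have hnL' : n ≤ L := by omega
        have hmem : n + 1 ∈ Finset.Icc 1 L := by simp; omega
        set φ := descComp P n ψ with hφ
        have hp : descComp P (n + 1) ψ = P (n + 1) φ := by
          simp [descComp, hφ]
        rw [hp]
        have hs := hsym (n + 1) hmem
        have hi := hidem' (n + 1) hmem
        set Q := P (n + 1)
        -- Pythagoras on φ
        have h1 : ‖φ‖ ^ 2 = ‖Q φ‖ ^ 2 + ‖φ - Q φ‖ ^ 2 := aux_pyth Q hs hi φ
        -- expansion of E_{n+1}
        set r : ℝ := RCLike.re ⟪ψ - Q ψ, φ - Q φ⟫_ℂ with hr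
        have hdecomp : ψ - Q φ = (ψ - φ) + (φ - Q φ) := by abel
        have hinner : RCLike.re ⟪ψ - φ, φ - Q φ⟫_ℂ = r - ‖φ - Q φ‖ ^ 2 := by
          have e1 : ψ - φ = ((ψ - φ) - Q (ψ - φ)) + Q (ψ - φ) := by abel
          have e2 : ⟪Q (ψ - φ), φ - Q φ⟫_ℂ = 0 := aux_orth Q hs hi (ψ - φ) φ
          have e3 : (ψ - φ) - Q (ψ - φ) = (ψ - Q ψ) - (φ - Q φ) := by
            rw [map_sub]; abel
          calc RCLike.re ⟪ψ - φ, φ - Q φ⟫_ℂ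
              = RCLike.re ⟪((ψ - φ) - Q (ψ - φ)) + Q (ψ - φ), φ - Q φ⟫_ℂ := by rw [← e1]
            _ = RCLike.re ⟪(ψ - Q ψ) - (φ - Q φ), φ - Q φ⟫_ℂ := by
                rw [inner_add_left, e2, e3]; rw [add_zero]
            _ = r - ‖φ - Q φ‖ ^ 2 := by
                have h5 : RCLike.re ⟪φ - Q φ, φ - Q φ⟫_ℂ = ‖φ - Q φ‖ ^ 2 :=
                  inner_self_eq_norm_sq (𝕜 := ℂ) (φ - Q φ)
                rw [inner_sub_left, map_sub, h5, hr]
        have h2 : ‖ψ - Q φ‖ ^ 2 = ‖ψ - φ‖ ^ 2 - ‖φ - Q φ‖ ^ 2 + 2 * r := by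
          rw [hdecomp, norm_add_sq (𝕜 := ℂ), hinner]; ring
        -- Cauchy-Schwarz + AM-GM
        have hcs : r ≤ ‖ψ - Q ψ‖ * ‖φ - Q φ‖ := re_inner_le_norm _ _
        have h3 : (1 + c⁻¹) * (2 * r)
            ≤ (2 + c + c⁻¹) * ‖ψ - Q ψ‖ ^ 2 + c⁻¹ * ‖φ - Q φ‖ ^ 2 := by
          nlinarith [sq_nonneg ((1 + c) * ‖ψ - Q ψ‖ - ‖φ - Q φ‖), hc, hc', hcc,
            sq_nonneg (‖ψ - Q ψ‖), sq_nonneg (‖φ - Q φ‖)]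
        have ihn := ih hn1 hnL'
        have hsum : ∑ i ∈ Finset.Icc 2 (n + 1), ‖ψ - P i ψ‖ ^ 2
            = (∑ i ∈ Finset.Icc 2 n, ‖ψ - P i ψ‖ ^ 2) + ‖ψ - Q ψ‖ ^ 2 :=
          Finset.sum_Icc_succ_top (by omega) _
        rw [hsum]
        have hE : (1 + c⁻¹) * ‖ψ - Q φ‖ ^ 2
            = (1 + c⁻¹) * ‖ψ - φ‖ ^ 2 - (1 + c⁻¹) * ‖φ - Q φ‖ ^ 2
              + (1 + c⁻¹) * (2 * r) := by rw [h2]; ring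
        nlinarith [ihn, hE, h3, h1]
  -- conclude
  rcases Nat.lt_or_ge L 2 with hL2 | hL2
  · -- L = 1
    have hL1 : L = 1 := by omega
    subst hL1
    have h1L : 1 ∈ Finset.Icc 1 1 := by decide
    have hp : descComp P 1 ψ = P 1 ψ := by simp [descComp]
    rw [hp, hone]
    have hpy := aux_pyth (P 1) (hsym 1 h1L) (hidem' 1 h1L) ψ
    have hsum : (Finset.Icc 2 0) = (∅ : Finset ℕ) := by decide
    rw [hsum]
    simp only [Finset.sum_empty, mul_zero]
    nlinarith [sq_nonneg (‖ψ - P 1 ψ‖)]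
  · -- L ≥ 2
    have hmemL : L ∈ Finset.Icc 1 L := by simp [hL]
    have hsL := hsym L hmemL
    have hiL := hidem' L hmemL
    obtain ⟨n, rfl⟩ : ∃ n, L = n + 1 := ⟨L - 1, by omega⟩
    have hn1 : 1 ≤ n := by omega
    set φ := descComp P n ψ with hφ
    have hp : descComp P (n + 1) ψ = P (n + 1) φ := by simp [descComp, hφ]
    rw [hp, hone, hone]
    set Q := P (n + 1)
    have h1 : ‖φ‖ ^ 2 = ‖Q φ‖ ^ 2 + ‖φ - Q φ‖ ^ 2 := aux_pyth Q hsL hiL φ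
    -- bound d_L
    have hw : ‖(ψ - φ) - Q (ψ - φ)‖ ≤ ‖ψ - φ‖ := aux_contract Q hsL hiL (ψ - φ)
    have hdec : φ - Q φ = (ψ - Q ψ) - ((ψ - φ) - Q (ψ - φ)) := by
      rw [map_sub]; abel
    have hdL : ‖φ - Q φ‖ ^ 2 ≤ (1 + c) * ‖ψ - Q ψ‖ ^ 2 + (1 + c⁻¹) * ‖ψ - φ‖ ^ 2 := by
      have htri : ‖φ - Q φ‖ ≤ ‖ψ - Q ψ‖ + ‖(ψ - φ) - Q (ψ - φ)‖ := by
        rw [hdec]; exact norm_sub_le _ _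
      have h4 : ‖φ - Q φ‖ ^ 2 ≤ (‖ψ - Q ψ‖ + ‖(ψ - φ) - Q (ψ - φ)‖) ^ 2 :=
        pow_le_pow_left₀ (norm_nonneg _) htri 2
      exact real_amgm (norm_nonneg _) (norm_nonneg _) hw hc h4
    have hkey := key n hn1 (by omega)
    simp only [Nat.add_sub_cancel]
    have hrw : ∀ i, ‖(1 - P i) ψ‖ = ‖ψ - P i ψ‖ := fun i => by rw [hone]
    have hsumrw : ∑ i ∈ Finset.Icc 2 n, ‖(1 - P i) ψ‖ ^ 2
        = ∑ i ∈ Finset.Icc 2 n, ‖ψ - P i ψ‖ ^ 2 := by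
      apply Finset.sum_congr rfl; intro i _; rw [hrw]
    rw [hsumrw]
    linarith [hkey, h1, hdL]
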